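/- Let F ∈ ℂ[x₀,…,xₙ] be a non-degenerate cubic form. Then the set W_F = {p ∈ ℙⁿ(ℂ) : rk 𝓗_F(p) ≤ 1} is finite. -/

import Mathlib

open MvPolynomial

noncomputable section

/-- The Hessian matrix of a multivariate polynomial `F`, evaluated at the point `x`. -/
def hess {m : ℕ} {R : Type*} [CommSemiring R] (F : MvPolynomial (Fin m) R)
    (x : Fin m → R) : Matrix (Fin m) (Fin m) R :=
  Matrix.of fun i j => eval x (pderiv i (pderiv j F))

/-- A polynomial is non-degenerate if the determinant of its Hessian is not
identically zero. -/
def nondeg {m : ℕ} {R : Type*} [CommRing R] (F : MvPolynomial (Fin m) R) : Prop :=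
  ∃ x, (hess F x).det ≠ 0

/-- The substitution action of a matrix on a polynomial: `(T · F)(x) = F (T.mulVec x)`. -/
def matAct {m : ℕ} {R : Type*} [CommSemiring R] (T : Matrix (Fin m) (Fin m) R)
    (F : MvPolynomial (Fin m) R) : MvPolynomial (Fin m) R :=
  bind₁ (fun i => ∑ j, C (T i j) * X j) F

/-- The projective hypersurface `{F = 0}` is smooth: the only common zero of the
partial derivatives of `F` is the origin. -/
def smoothHyp {m : ℕ} (F : MvPolynomial (Fin m) ℂ) : Prop :=
  ∀ x : Fin m → ℂ, (∀ i, eval x (pderiv i F) = 0) → x = 0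

/-- The polynomial `a·x₀³ + x₀²·(∑ᵢ bᵢ xᵢ) + G(x₁, …, xₙ)`. -/
def redPoly {m : ℕ} {R : Type*} [CommSemiring R] (a : R) (B : Fin m → R)
    (G : MvPolynomial (Fin m) R) : MvPolynomial (Fin (m + 1)) R :=
  C a * X 0 ^ 3 + X 0 ^ 2 * (∑ i, C (B i) * X i.succ) + rename Fin.succ G

/-- `(a, B, G)` is a reduced triple associated to `F`: `G` is a non-degenerate
cubic form and some `T ∈ SL(n+1, ℤ)` puts `F` in the reduced form `(a, B, G)`. -/
def IsReducedTriple {n : ℕ} (F : MvPolynomial (Fin (n + 1)) ℤ)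
    (a : ℤ) (B : Fin n → ℤ) (G : MvPolynomial (Fin n) ℤ) : Prop :=
  G.IsHomogeneous 3 ∧ nondeg G ∧
    ∃ T : Matrix (Fin (n + 1)) (Fin (n + 1)) ℤ, T.det = 1 ∧ matAct T F = redPoly a B G

/-- Equivalence of reduced triples over ℤ: `a = a'` and some `M ∈ SL(n, ℤ)`
carries `(B, G)` to `(B', G')`. -/
def TripleEquiv {n : ℕ} (a : ℤ) (B : Fin n → ℤ) (G : MvPolynomial (Fin n) ℤ)
    (a' : ℤ) (B' : Fin n → ℤ) (G' : MvPolynomial (Fin n) ℤ) : Prop :=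
  a = a' ∧ ∃ M : Matrix (Fin n) (Fin n) ℤ, M.det = 1 ∧ B' = M.mulVec B ∧ G' = matAct M G

open Matrix

private lemma coeff_pderiv_aux {m : ℕ} (i : Fin m) (d : Fin m →₀ ℕ)
    (p : MvPolynomial (Fin m) ℂ) :
    coeff d (pderiv i p) = ((d i : ℂ) + 1) * coeff (d + Finsupp.single i 1) p := by
  induction p using MvPolynomial.induction_on' with
  | monomial s a =>
    rw [pderiv_monomial, coeff_monomial, coeff_monomial]
    by_cases h : s = d + Finsupp.single i 1
    · subst h
      have h1 : d + Finsupp.single i 1 - Finsupp.single i 1 = d := by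
        ext x; simp
      rw [if_pos h1, if_pos rfl, Finsupp.add_apply, Finsupp.single_eq_same]
      push_cast
      ring
    · rw [if_neg h]
      by_cases h2 : s - Finsupp.single i 1 = d
      · have hsi : s i = 0 := by
          by_contra hsi
          exact h (by
            rw [← h2, tsub_add_cancel_of_le
              (Finsupp.single_le_iff.mpr (Nat.one_le_iff_ne_zero.mpr hsi))])
        rw [if_pos h2, hsi]
        push_cast
        ring
      · rw [if_neg h2]
        ring
  | add p q hp hq =>
    simp only [map_add, coeff_add, hp, hq]
    ring

private lemma pderiv_pderiv_comm_aux {m : ℕ} (i j : Fin m) (p : MvPolynomial (Fin m) ℂ) :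
    pderiv i (pderiv j p) = pderiv j (pderiv i p) := by
  ext d
  rw [coeff_pderiv_aux, coeff_pderiv_aux, coeff_pderiv_aux, coeff_pderiv_aux]
  rw [show d + Finsupp.single j 1 + Finsupp.single i 1
      = d + Finsupp.single i 1 + Finsupp.single j 1 by rw [add_right_comm]]
  simp only [Finsupp.add_apply, Finsupp.single_apply]
  rcases eq_or_ne i j with h | h
  · subst h; push_cast; ring
  · rw [if_neg h, if_neg (Ne.symm h)]
    push_cast
    ring

private lemma pderiv_isHomogeneous_aux {m n : ℕ} {p : MvPolynomial (Fin m) ℂ}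
    (hp : p.IsHomogeneous (n + 1)) (i : Fin m) : (pderiv i p).IsHomogeneous n := by
  intro d hd
  rw [coeff_pderiv_aux] at hd
  have h2 : coeff (d + Finsupp.single i 1) p ≠ 0 := fun h => hd (by rw [h, mul_zero])
  have h3 := hp h2
  have h4 : (Finsupp.weight 1) (d + Finsupp.single i 1)
      = (Finsupp.weight (1 : Fin m → ℕ)) d + 1 := by
    rw [map_add]
    congr 1
    simp [Finsupp.weight_apply, Finsupp.sum_single_index]
  rw [h4] at h3
  omega

private lemma degree_one_single_aux {m : ℕ} {d : Fin m →₀ ℕ}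
    (h : (Finsupp.weight (1 : Fin m → ℕ)) d = 1) : ∃ k, d = Finsupp.single k 1 := by
  have hd : Finsupp.degree d = 1 := by rw [Finsupp.degree_eq_weight_one]; exact h
  have hne : d ≠ 0 := by
    intro h0
    rw [h0, map_zero] at hd
    exact one_ne_zero hd.symm
  obtain ⟨k, hk⟩ := Finsupp.support_nonempty_iff.mpr hne
  have hcard : d.support.card ≤ 1 := by
    have h1 : d.support.card ≤ Finsupp.degree d := by
      rw [Finset.card_eq_sum_ones]
      exact Finset.sum_le_sum fun i hi =>
        Nat.one_le_iff_ne_zero.mpr (Finsupp.mem_support_iff.mp hi)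
    omega
  have hsupp : d.support = {k} :=
    Finset.eq_singleton_iff_unique_mem.mpr
      ⟨hk, fun x hx => Finset.card_le_one.mp hcard x hx k hk⟩
  obtain ⟨hkne, hsingle⟩ := Finsupp.support_eq_singleton.mp hsupp
  have hdk : d k = 1 := by
    have h5 : Finsupp.degree d = d k := by
      simp only [Finsupp.degree_apply, hsupp, Finset.sum_singleton]
    omega
  exact ⟨k, by rw [hsingle, hdk]⟩

private lemma eval_isHomogeneous_one_aux {m : ℕ} {P : MvPolynomial (Fin m) ℂ}
    (hP : P.IsHomogeneous 1) (x : Fin m → ℂ) :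
    eval x P = ∑ k, coeff (Finsupp.single k 1) P * x k := by
  classical
  rw [eval_eq]
  have hinj : Function.Injective (fun k : Fin m => Finsupp.single k (1 : ℕ)) :=
    fun a b hab => Finsupp.single_left_injective one_ne_zero hab
  have himg : P.support ⊆ Finset.univ.image (fun k : Fin m => Finsupp.single k (1 : ℕ)) := by
    intro d hd
    obtain ⟨k, hk⟩ := degree_one_single_aux (hP (MvPolynomial.mem_support_iff.mp hd))
    exact Finset.mem_image.mpr ⟨k, Finset.mem_univ k, hk.symm⟩
  rw [Finset.sum_subset himg (fun d _ hd => by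
    rw [MvPolynomial.notMem_support_iff.mp hd, zero_mul])]
  rw [Finset.sum_image (fun a _ b _ hab => hinj hab)]
  refine Finset.sum_congr rfl fun k _ => ?_
  congr 1
  rw [Finsupp.support_single_ne_zero k one_ne_zero, Finset.prod_singleton,
    Finsupp.single_eq_same, pow_one]

private lemma hess_transpose {m : ℕ} (F : MvPolynomial (Fin m) ℂ) (x : Fin m → ℂ) :
    (hess F x)ᵀ = hess F x := by
  ext i j
  show eval x (pderiv j (pderiv i F)) = eval x (pderiv i (pderiv j F))
  rw [pderiv_pderiv_comm_aux]

private lemma hess_mulVec_symm {m : ℕ} {F : MvPolynomial (Fin m) ℂ}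
    (hF : F.IsHomogeneous 3) (x y : Fin m → ℂ) :
    (hess F x).mulVec y = (hess F y).mulVec x := by
  have hPhom : ∀ i j : Fin m, (pderiv i (pderiv j F)).IsHomogeneous 1 := fun i j =>
    pderiv_isHomogeneous_aux (pderiv_isHomogeneous_aux (p := F) (n := 2) hF j) i
  funext i
  show ∑ j, eval x (pderiv i (pderiv j F)) * y j = ∑ j, eval y (pderiv i (pderiv j F)) * x j
  have hc : ∀ j k : Fin m, coeff (Finsupp.single k 1) (pderiv i (pderiv j F))
      = coeff (Finsupp.single j 1) (pderiv i (pderiv k F)) := by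
    intro j k
    rw [pderiv_pderiv_comm_aux i j, pderiv_pderiv_comm_aux i k,
      coeff_pderiv_aux j (Finsupp.single k 1) (pderiv i F),
      coeff_pderiv_aux k (Finsupp.single j 1) (pderiv i F),
      add_comm (Finsupp.single j 1) (Finsupp.single k 1)]
    simp only [Finsupp.single_apply]
    rcases eq_or_ne j k with h | h
    · subst h; ring
    · rw [if_neg (Ne.symm h), if_neg h]
  calc ∑ j, eval x (pderiv i (pderiv j F)) * y j
      = ∑ j, ∑ k, coeff (Finsupp.single k 1) (pderiv i (pderiv j F)) * x k * y j := by
        refine Finset.sum_congr rfl fun j _ => ?_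
        rw [eval_isHomogeneous_one_aux (hPhom i j), Finset.sum_mul]
    _ = ∑ k, ∑ j, coeff (Finsupp.single k 1) (pderiv i (pderiv j F)) * x k * y j :=
        Finset.sum_comm
    _ = ∑ j, eval y (pderiv i (pderiv j F)) * x j := by
        refine Finset.sum_congr rfl fun k _ => ?_
        rw [eval_isHomogeneous_one_aux (hPhom i k), Finset.sum_mul]
        refine Finset.sum_congr rfl fun j _ => ?_
        rw [hc j k]
        ring

private lemma rank_one_structure {m : ℕ} (H' : (Fin m → ℂ) → Matrix (Fin m) (Fin m) ℂ)
    (hsymm : ∀ x y, (H' x).mulVec y = (H' y).mulVec x)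
    (htr : ∀ z, (H' z)ᵀ = H' z)
    (y₀ : Fin m → ℂ) (hg : (H' y₀).det ≠ 0)
    (q : Fin m → ℂ) (hq : q ≠ 0) (hrank : (H' q).rank ≤ 1) :
    ∃ γ : ℂ, γ ≠ 0 ∧ ∀ y, (H' y).mulVec q
      = (γ * ((H' y₀).mulVec q ⬝ᵥ y)) • (H' y₀).mulVec q := by
  classical
  set M := H' q with hM
  set b := (H' y₀).mulVec q with hbdef
  have hginj : Function.Injective (H' y₀).mulVec :=
    Matrix.mulVec_injective_iff_isUnit.mpr
      ((Matrix.isUnit_iff_isUnit_det _).mpr (isUnit_iff_ne_zero.mpr hg))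
  have hb0 : b ≠ 0 := by
    intro h
    exact hq (hginj (by rw [← hbdef, h, Matrix.mulVec_zero]))
  have hbM : b = M.mulVec y₀ := hsymm y₀ q
  have hbrange : b ∈ LinearMap.range M.mulVecLin :=
    ⟨y₀, by rw [Matrix.mulVecLin_apply, ← hbM]⟩
  have hle : Submodule.span ℂ {b} ≤ LinearMap.range M.mulVecLin := by
    rw [Submodule.span_singleton_le_iff_mem]; exact hbrange
  have hfr : Module.finrank ℂ (LinearMap.range M.mulVecLin) ≤ 1 := hrank
  have hspan : Submodule.span ℂ {b} = LinearMap.range M.mulVecLin := by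
    refine Submodule.eq_of_le_of_finrank_le hle ?_
    rw [finrank_span_singleton hb0]; exact hfr
  obtain ⟨k₀, hk₀⟩ := Function.ne_iff.mp hb0
  have hk₀' : b k₀ ≠ 0 := by simpa using hk₀
  have hmem : ∀ y, ∃ c : ℂ, M.mulVec y = c • b := by
    intro y
    have hy : M.mulVec y ∈ LinearMap.range M.mulVecLin := ⟨y, rfl⟩
    rw [← hspan, Submodule.mem_span_singleton] at hy
    obtain ⟨c, hc⟩ := hy
    exact ⟨c, hc.symm⟩
  set cvec : Fin m → ℂ := fun k => M k₀ k / b k₀ with hcvec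
  have hMy : ∀ y, M.mulVec y = (cvec ⬝ᵥ y) • b := by
    intro y
    obtain ⟨c, hc⟩ := hmem y
    have hck : M.mulVec y k₀ = c * b k₀ := by rw [hc]; rfl
    have hcval : c = M.mulVec y k₀ / b k₀ := by
      rw [hck]; field_simp
    have hdot : cvec ⬝ᵥ y = M.mulVec y k₀ / b k₀ := by
      simp only [dotProduct, hcvec, Matrix.mulVec, div_mul_eq_mul_div]
      rw [← Finset.sum_div]
    rw [hc, hcval, hdot]
  have hsym2 : ∀ k l, cvec l * b k = cvec k * b l := by
    intro k l
    have h1 : M.mulVec (Pi.single l 1) k = cvec l * b k := by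
      rw [hMy]
      simp [dotProduct_single]
    have h2 : M.mulVec (Pi.single k 1) l = cvec k * b l := by
      rw [hMy]
      simp [dotProduct_single]
    have h3 : M.mulVec (Pi.single l 1) k = M k l := by simp
    have h4 : M.mulVec (Pi.single k 1) l = M l k := by simp
    have h5 : M k l = M l k := by
      have := congrFun (congrFun (htr q) k) l
      rw [← hM] at this
      exact this.symm
    rw [h3, h5, ← h4, h2] at h1
    exact h1.symm
  set γ : ℂ := cvec k₀ / b k₀ with hγdef
  have hcveq : ∀ l, cvec l = γ * b l := by
    intro l
    rw [hγdef, div_mul_eq_mul_div, eq_div_iff hk₀']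
    exact hsym2 k₀ l
  have hγ0 : γ ≠ 0 := by
    intro h0
    have hcz : ∀ l, cvec l = 0 := fun l => by rw [hcveq l, h0, zero_mul]
    have hdz : cvec ⬝ᵥ y₀ = 0 := by
      simp [dotProduct, hcz]
    have hb' : b = (cvec ⬝ᵥ y₀) • b := by rw [← hMy y₀, ← hbM]
    rw [hdz, zero_smul] at hb'
    exact hb0 hb'
  refine ⟨γ, hγ0, fun y => ?_⟩
  rw [hsymm y q, hMy y]
  congr 1
  simp only [dotProduct, Finset.mul_sum]
  refine Finset.sum_congr rfl fun l _ => ?_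
  rw [hcveq l]
  ring

private lemma indep_of_struct {m : ℕ} {ι : Type*} (H' : (Fin m → ℂ) → Matrix (Fin m) (Fin m) ℂ)
    (g : Matrix (Fin m) (Fin m) ℂ) (hginj : Function.Injective g.mulVecLin)
    (v : ι → Fin m → ℂ) (hv0 : ∀ i, v i ≠ 0)
    (hvp : ∀ i j, i ≠ j → ∀ a : ℂ, v i ≠ a • v j)
    (γ : ι → ℂ) (hγ0 : ∀ i, γ i ≠ 0)
    (hγ : ∀ i y, (H' y).mulVec (v i) = (γ i * (g.mulVec (v i) ⬝ᵥ y)) • g.mulVec (v i)) :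
    LinearIndependent ℂ v := by
  classical
  by_contra hli
  rw [linearIndependent_iff] at hli
  push_neg at hli
  have hex : ∃ k, ∃ l : ι →₀ ℂ, Finsupp.linearCombination ℂ v l = 0 ∧ l ≠ 0
      ∧ l.support.card = k := by
    obtain ⟨l0, h1, h2⟩ := hli
    exact ⟨l0.support.card, l0, h1, h2, rfl⟩
  obtain ⟨l, hl, hlne, hlcard⟩ := Nat.find_spec hex
  have hmin : ∀ l' : ι →₀ ℂ, Finsupp.linearCombination ℂ v l' = 0 → l' ≠ 0 →
      Nat.find hex ≤ l'.support.card := fun l' h1 h2 =>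
    Nat.find_min' hex ⟨l', h1, h2, rfl⟩
  set t := l.support with ht
  have hrel : ∑ i ∈ t, l i • v i = 0 := by
    rw [← hl, Finsupp.linearCombination_apply, Finsupp.sum]
  obtain ⟨j, hj⟩ := Finsupp.support_nonempty_iff.mpr hlne
  set b : ι → Fin m → ℂ := fun i => g.mulVec (v i) with hb
  -- the support has at least two elements
  have htwo : (t.erase j).Nonempty := by
    rw [Finset.nonempty_iff_ne_empty]
    intro hemp
    have hsing : t = {j} := by
      apply Finset.eq_singleton_iff_unique_mem.mpr
      refine ⟨hj, fun x hx => ?_⟩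
      by_contra hxj
      exact (Finset.notMem_empty x) (hemp ▸ Finset.mem_erase.mpr ⟨hxj, hx⟩)
    have hzz : l j • v j = 0 := by
      rw [← Finset.sum_singleton (fun i => l i • v i) j, ← hsing]
      exact hrel
    rcases smul_eq_zero.mp hzz with h | h
    · exact (Finsupp.mem_support_iff.mp hj) h
    · exact hv0 j h
  obtain ⟨i₀, hi₀⟩ := htwo
  have hi₀j : i₀ ≠ j := (Finset.mem_erase.mp hi₀).1
  have hi₀t : i₀ ∈ t := (Finset.mem_erase.mp hi₀).2
  have hbrel : ∑ i ∈ t, l i • b i = 0 := by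
    have h0 := congrArg g.mulVecLin hrel
    rw [map_sum, map_zero] at h0
    simpa only [Matrix.mulVecLin_apply, Matrix.mulVec_smul] using h0
  have hjb : ∑ i ∈ t.erase j, l i • b i = -(l j • b j) := by
    have h0 := Finset.add_sum_erase t (fun i => l i • b i) hj
    rw [hbrel] at h0
    exact eq_neg_of_add_eq_zero_right h0
  have hkey : ∀ y, ∑ i ∈ t, (l i * (γ i * (b i ⬝ᵥ y))) • b i = 0 := by
    intro y
    have h0 : (H' y).mulVecLin (∑ i ∈ t, l i • v i) = 0 := by rw [hrel, map_zero]
    rw [map_sum] at h0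
    calc ∑ i ∈ t, (l i * (γ i * (b i ⬝ᵥ y))) • b i
        = ∑ i ∈ t, (H' y).mulVecLin (l i • v i) := by
          refine Finset.sum_congr rfl fun i _ => ?_
          rw [Matrix.mulVecLin_apply, Matrix.mulVec_smul, hγ i y, smul_smul]
      _ = 0 := h0
  -- the coefficient function
  set c : ι → (Fin m → ℂ) → ℂ :=
    fun i y => l i * (γ i * (b i ⬝ᵥ y)) - γ j * (b j ⬝ᵥ y) * l i with hc
  have hcoeff : ∀ y, ∀ i ∈ t.erase j, c i y = 0 := by
    intro y
    have hsplit : ∑ i ∈ t.erase j, (l i * (γ i * (b i ⬝ᵥ y))) • b i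
        = (γ j * (b j ⬝ᵥ y)) • ∑ i ∈ t.erase j, l i • b i := by
      have h2 := hkey y
      rw [← Finset.add_sum_erase t (fun i => (l i * (γ i * (b i ⬝ᵥ y))) • b i) hj] at h2
      have h4 := eq_neg_of_add_eq_zero_right h2
      rw [h4, hjb, smul_neg, smul_smul, mul_comm (γ j * (b j ⬝ᵥ y)) (l j)]
    have hzero : ∑ i ∈ t.erase j, c i y • v i = 0 := by
      apply hginj
      rw [map_sum, map_zero]
      have : ∑ i ∈ t.erase j, c i y • b i = 0 := by
        simp only [hc, sub_smul]
        rw [Finset.sum_sub_distrib, hsplit, Finset.smul_sum]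
        rw [sub_eq_zero]
        refine Finset.sum_congr rfl fun i _ => ?_
        rw [smul_smul]
      simpa only [Matrix.mulVecLin_apply, Matrix.mulVec_smul] using this
    -- build a finsupp witnessing this relation
    set l' : ι →₀ ℂ := ∑ i ∈ t.erase j, Finsupp.single i (c i y) with hl'
    have hl'supp : l'.support ⊆ t.erase j := by
      intro x hx
      rw [hl'] at hx
      obtain ⟨i, hi, hxi⟩ := Finsupp.mem_support_finset_sum x hx
      have hxi' := Finsupp.support_single_subset hxi
      rw [Finset.mem_singleton] at hxi'
      rwa [hxi']
    have hl'comb : Finsupp.linearCombination ℂ v l' = 0 := by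
      rw [hl', map_sum]
      simpa only [Finsupp.linearCombination_single] using hzero
    have hl'zero : l' = 0 := by
      by_contra hne
      have hcard : l'.support.card < Nat.find hex :=
        lt_of_le_of_lt (Finset.card_le_card hl'supp)
          (lt_of_lt_of_eq (Finset.card_erase_lt_of_mem hj) hlcard)
      exact absurd (hmin l' hl'comb hne) (not_le.mpr hcard)
    intro i hi
    have happ : l' i = c i y := by
      rw [hl', Finsupp.finset_sum_apply]
      rw [Finset.sum_eq_single i (fun x _ hx => Finsupp.single_eq_of_ne' hx)
        (fun hni => absurd hi hni)]
      exact Finsupp.single_eq_same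
    rw [hl'zero] at happ
    simpa using happ.symm
  -- from the vanishing coefficients at i₀, conclude parallelism
  have hli₀ : l i₀ ≠ 0 := Finsupp.mem_support_iff.mp hi₀t
  have heq : ∀ y, γ i₀ * (b i₀ ⬝ᵥ y) = γ j * (b j ⬝ᵥ y) := by
    intro y
    have h0 := hcoeff y i₀ hi₀
    rw [hc] at h0
    have h1 : l i₀ * (γ i₀ * (b i₀ ⬝ᵥ y) - γ j * (b j ⬝ᵥ y)) = 0 := by
      rw [mul_sub, ← h0]
      ring
    rcases mul_eq_zero.mp h1 with h | h
    · exact absurd h hli₀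
    · exact sub_eq_zero.mp h
  have hveq : γ i₀ • b i₀ = γ j • b j := by
    funext k
    have hk := heq (Pi.single k 1)
    rw [dotProduct_single, dotProduct_single, mul_one, mul_one] at hk
    simpa [Pi.smul_apply, smul_eq_mul] using hk
  have hvv : γ i₀ • v i₀ = γ j • v j := by
    apply hginj
    simp only [Matrix.mulVecLin_apply, Matrix.mulVec_smul]
    exact hveq
  have hfin : v i₀ = ((γ i₀)⁻¹ * γ j) • v j := by
    have h6 := congrArg (fun w => (γ i₀)⁻¹ • w) hvv
    simpa [smul_smul, inv_mul_cancel₀ (hγ0 i₀)] using h6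
  exact hvp i₀ j hi₀j _ hfin

/-- Proposition 3.3. For a non-degenerate cubic form
`F ∈ ℂ[x₀,…,xₙ]`, the set `W_F = {p ∈ ℙⁿ(ℂ) : rk 𝓗_F(p) ≤ 1}` is finite. -/
theorem stmt1 {n : ℕ} (F : MvPolynomial (Fin (n + 1)) ℂ)
    (hF3 : F.IsHomogeneous 3) (hnd : nondeg F) :
    {p : Projectivization ℂ (Fin (n + 1) → ℂ) | (hess F p.rep).rank ≤ 1}.Finite := by
  classical
  obtain ⟨y₀, hg⟩ := hnd
  set W := {p : Projectivization ℂ (Fin (n + 1) → ℂ) | (hess F p.rep).rank ≤ 1} with hW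
  have hsymm : ∀ x y, (hess F x).mulVec y = (hess F y).mulVec x := hess_mulVec_symm hF3
  have htr : ∀ z, (hess F z)ᵀ = hess F z := hess_transpose F
  have hstruct : ∀ p : W, ∃ γ : ℂ, γ ≠ 0 ∧ ∀ y,
      (hess F y).mulVec p.1.rep
        = (γ * ((hess F y₀).mulVec p.1.rep ⬝ᵥ y)) • (hess F y₀).mulVec p.1.rep :=
    fun p => rank_one_structure (hess F) hsymm htr y₀ hg p.1.rep
      (Projectivization.rep_nonzero p.1) p.2
  choose γ hγ0 hγ using hstruct
  have hginj : Function.Injective (hess F y₀).mulVecLin := by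
    have h1 := Matrix.mulVec_injective_iff_isUnit.mpr
      ((Matrix.isUnit_iff_isUnit_det _).mpr (isUnit_iff_ne_zero.mpr hg))
    intro a b hab
    exact h1 (by simpa [Matrix.mulVecLin_apply] using hab)
  have hv0 : ∀ p : W, p.1.rep ≠ 0 := fun p => Projectivization.rep_nonzero p.1
  have hvp : ∀ p q : W, p ≠ q → ∀ a : ℂ, p.1.rep ≠ a • q.1.rep := by
    intro p q hpq a hrep
    apply hpq
    have ha : a ≠ 0 := by
      intro h0
      rw [h0, zero_smul] at hrep
      exact hv0 p hrep
    apply Subtype.ext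
    have h1 : Projectivization.mk ℂ p.1.rep (hv0 p) = Projectivization.mk ℂ q.1.rep (hv0 q) := by
      rw [Projectivization.mk_eq_mk_iff']
      exact ⟨a, hrep.symm⟩
    rw [Projectivization.mk_rep, Projectivization.mk_rep] at h1
    exact h1
  have hli : LinearIndependent ℂ (fun p : W => p.1.rep) :=
    indep_of_struct (hess F) (hess F y₀) hginj _ hv0 hvp γ hγ0 hγ
  have hfin : Finite W := hli.finite
  exact Set.finite_coe_iff.mp hfin
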